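/- For the Gray digit space (I, GF), two sequences α, β ∈ GF^ω satisfy ⟦α⟧_G = ⟦β⟧_G if and only if either α = β, or there is an index i ≥ 0 such that α_j = β_j for all j < i, {α_i, β_i} = {g_{-1}, g_1}, α_{i+1} = β_{i+1} = g_1, and α_j = β_j = g_{-1} for all j > i+1. -/

import Mathlib

/-- `seqComp α n` is the composition `α 0 ∘ α 1 ∘ ⋯ ∘ α (n-1)`. -/
def seqComp {X : Type*} (α : ℕ → X → X) : ℕ → X → X
  | 0 => id
  | n + 1 => seqComp α n ∘ α n

/-- The Gray digit `gᵢ(x) = -i·(x-1)/2`. -/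
noncomputable def gmap (i : ℝ) (x : ℝ) : ℝ := -i * (x - 1) / 2

namespace Stmt7Aux

open Classical in
noncomputable def dseq (α : ℕ → ℝ → ℝ) (n : ℕ) : ℝ :=
  if α n = gmap 1 then 1 else -1

lemma gmap_ne : gmap (-1 : ℝ) ≠ gmap 1 := by
  intro h
  have := congrFun h (-1)
  simp [gmap] at this
  linarith

lemma dseq_spec (α : ℕ → ℝ → ℝ) (hα : ∀ n, α n = gmap (-1) ∨ α n = gmap 1) (n : ℕ) :
    α n = gmap (dseq α n) := by
  unfold dseq
  rcases hα n with h | h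
  · rw [if_neg (by rw [h]; exact gmap_ne), h]
  · rw [if_pos h, h]

lemma dseq_pm (α : ℕ → ℝ → ℝ) (n : ℕ) : dseq α n = 1 ∨ dseq α n = -1 := by
  unfold dseq; split <;> simp

lemma dseq_congr {α β : ℕ → ℝ → ℝ} {n : ℕ} (h : α n = β n) : dseq α n = dseq β n := by
  unfold dseq; rw [h]

lemma dseq_eq_one {α : ℕ → ℝ → ℝ} {n : ℕ} (h : α n = gmap 1) : dseq α n = 1 := by
  unfold dseq; rw [if_pos h]

lemma dseq_eq_neg_one {α : ℕ → ℝ → ℝ} {n : ℕ} (h : α n = gmap (-1)) : dseq α n = -1 := by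
  unfold dseq; rw [if_neg (by rw [h]; exact gmap_ne)]

noncomputable def E (d : ℕ → ℝ) (n : ℕ) : ℝ := (-1)^n * ∏ k ∈ Finset.range (n+1), d k
noncomputable def S (d : ℕ → ℝ) (n : ℕ) : ℝ := ∏ k ∈ Finset.range n, (-(d k)/2)
noncomputable def C (d : ℕ → ℝ) (n : ℕ) : ℝ := ∑ k ∈ Finset.range n, E d k * (1/2)^(k+1)

lemma E_zero (d : ℕ → ℝ) : E d 0 = d 0 := by simp [E]

lemma E_succ (d : ℕ → ℝ) (n : ℕ) : E d (n+1) = -(d (n+1)) * E d n := by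
  unfold E
  rw [Finset.prod_range_succ (n := n+1)]
  ring

lemma E_pm {d : ℕ → ℝ} (hd : ∀ n, d n = 1 ∨ d n = -1) (n : ℕ) :
    E d n = 1 ∨ E d n = -1 := by
  induction n with
  | zero => rw [E_zero]; exact hd 0
  | succ n ih =>
    rw [E_succ]
    rcases hd (n+1) with h | h <;> rcases ih with h' | h' <;> rw [h, h'] <;> norm_num

lemma d_eq_of_E {d : ℕ → ℝ} (hd : ∀ n, d n = 1 ∨ d n = -1) (n : ℕ) :
    d (n+1) = -(E d (n+1)) * E d n := by
  have h2 : E d n * E d n = 1 := by rcases E_pm hd n with h' | h' <;> rw [h'] <;> norm_num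
  have h3 : -(E d (n+1)) * E d n = d (n+1) * (E d n * E d n) := by rw [E_succ]; ring
  rw [h3, h2, mul_one]

lemma E_congr {d d' : ℕ → ℝ} {n : ℕ} (h : ∀ k ≤ n, d k = d' k) : E d n = E d' n := by
  unfold E
  congr 1
  exact Finset.prod_congr rfl fun k hk => h k (Nat.lt_succ_iff.mp (Finset.mem_range.mp hk))

lemma C_succ (d : ℕ → ℝ) (n : ℕ) : C d (n+1) = C d n + E d n * (1/2)^(n+1) := by
  unfold C; rw [Finset.sum_range_succ]

lemma S_succ (d : ℕ → ℝ) (n : ℕ) : S d (n+1) = S d n * (-(d n)/2) := by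
  unfold S; rw [Finset.prod_range_succ]

lemma S_eq (d : ℕ → ℝ) (n : ℕ) : S d n = (-1)^n * (∏ k ∈ Finset.range n, d k) / 2^n := by
  unfold S
  induction n with
  | zero => simp
  | succ n ih =>
    rw [Finset.prod_range_succ, Finset.prod_range_succ, ih, pow_succ, pow_succ]
    ring

lemma SdE (d : ℕ → ℝ) (n : ℕ) : E d n * (1/2)^(n+1) = S d n * d n / 2 := by
  rw [S_eq]
  unfold E
  rw [Finset.prod_range_succ, one_div, inv_pow, pow_succ]
  field_simp

lemma seqComp_eq {α : ℕ → ℝ → ℝ} {d : ℕ → ℝ} (h : ∀ n, α n = gmap (d n)) :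
    ∀ n t, seqComp α n t = C d n + S d n * t := by
  intro n
  induction n with
  | zero => intro t; simp [seqComp, C, S]
  | succ n ih =>
    intro t
    show seqComp α n (α n t) = _
    rw [ih, h n, C_succ, S_succ, SdE]
    show C d n + S d n * (-(d n) * (t - 1) / 2) = _
    ring

lemma abs_S {d : ℕ → ℝ} (hd : ∀ n, d n = 1 ∨ d n = -1) (n : ℕ) : |S d n| = (1/2)^n := by
  induction n with
  | zero => simp [S]
  | succ n ih =>
    rw [S_succ, abs_mul, ih, pow_succ]
    rcases hd n with h | h <;> rw [h] <;> norm_num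

lemma close {α : ℕ → ℝ → ℝ} {d : ℕ → ℝ} (h : ∀ n, α n = gmap (d n))
    (hd : ∀ n, d n = 1 ∨ d n = -1) {x : ℝ} {n : ℕ}
    (hx : x ∈ seqComp α n '' Set.Icc (-1) 1) : |x - C d n| ≤ (1/2)^n := by
  obtain ⟨t, ht, hxt⟩ := hx
  rw [seqComp_eq h] at hxt
  have h1 : |t| ≤ 1 := abs_le.mpr ⟨ht.1, ht.2⟩
  calc |x - C d n| = |S d n| * |t| := by rw [← hxt, ← abs_mul]; ring_nf
    _ ≤ (1/2)^n * 1 := by rw [abs_S hd]; exact mul_le_mul_of_nonneg_left h1 (by positivity)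
    _ = (1/2)^n := mul_one _


lemma Ei_neg {d d' : ℕ → ℝ} {i : ℕ} (hm : ∀ j < i, d j = d' j) (hi : d i = -d' i) :
    E d' i = -(E d i) := by
  cases i with
  | zero => rw [E_zero, E_zero, hi]; ring
  | succ m =>
    rw [E_succ, E_succ, hi, E_congr (n := m) (fun j hj => hm j (Nat.lt_succ_of_le hj))]
    ring

lemma Cdiff {d d' : ℕ → ℝ} {i : ℕ} {σ : ℝ}
    (h1 : ∀ k < i, E d k = E d' k)
    (h2 : E d i = σ) (h2' : E d' i = -σ) :
    ∀ n, i + 1 ≤ n → (∀ k, i < k → k < n → E d k = -σ ∧ E d' k = σ) →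
      C d n - C d' n = 2 * σ * (1/2)^n := by
  intro n hn
  induction n, hn using Nat.le_induction with
  | base =>
    intro _
    have hCi : C d i = C d' i :=
      Finset.sum_congr rfl fun k hk => by rw [h1 k (Finset.mem_range.mp hk)]
    rw [C_succ, C_succ, hCi, h2, h2', pow_succ]
    ring
  | succ n hn ih =>
    intro h3
    have hd := ih (fun k hk1 hk2 => h3 k hk1 (Nat.lt_succ_of_lt hk2))
    have he := h3 n hn (Nat.lt_succ_self n)
    rw [C_succ, C_succ, he.1, he.2, pow_succ]
    linear_combination hd

lemma eq_of_close {x y : ℝ} (i : ℕ) (h : ∀ n, i < n → |x - y| ≤ 4 * (1/2)^n) : x = y := by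
  by_contra hne
  have hpos : 0 < |x - y| := abs_pos.mpr (sub_ne_zero.mpr hne)
  obtain ⟨n, hn⟩ := exists_pow_lt_of_lt_one (show (0:ℝ) < |x - y| / 4 by linarith)
    (by norm_num : (1/2 : ℝ) < 1)
  have hm : i < max n (i+1) := lt_of_lt_of_le (Nat.lt_succ_self i) (le_max_right _ _)
  have hle : ((1:ℝ)/2)^(max n (i+1)) ≤ (1/2)^n :=
    pow_le_pow_of_le_one (by norm_num) (by norm_num) (le_max_left _ _)
  have := h _ hm
  linarith

end Stmt7Aux

open Stmt7Aux

/-- In the Gray digit space `(I, GF)` with `I = [-1,1]` and `GF = {g₋₁, g₁}`: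
two digit sequences `α, β` have the same value under the coding map (i.e. the points `x`
and `y` they code coincide) if and only if either `α = β`, or there is an index `i` such
that `α` and `β` agree below `i`, `{α i, β i} = {g₋₁, g₁}`,
`α (i+1) = β (i+1) = g₁`, and `α j = β j = g₋₁` for all `j > i+1`. -/
theorem stmt7 (α β : ℕ → ℝ → ℝ)
    (hα : ∀ n, α n = gmap (-1) ∨ α n = gmap 1)
    (hβ : ∀ n, β n = gmap (-1) ∨ β n = gmap 1)
    (x y : ℝ)
    (hx : ∀ n : ℕ, x ∈ seqComp α n '' Set.Icc (-1) 1)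
    (hy : ∀ n : ℕ, y ∈ seqComp β n '' Set.Icc (-1) 1) :
    x = y ↔ (α = β ∨ ∃ i : ℕ,
      (∀ j < i, α j = β j) ∧
      ((α i = gmap (-1) ∧ β i = gmap 1) ∨ (α i = gmap 1 ∧ β i = gmap (-1))) ∧
      (α (i+1) = gmap 1 ∧ β (i+1) = gmap 1) ∧
      (∀ j > i + 1, α j = gmap (-1) ∧ β j = gmap (-1))) := by
  classical
  have hda : ∀ n, α n = gmap (dseq α n) := dseq_spec α hα
  have hdb : ∀ n, β n = gmap (dseq β n) := dseq_spec β hβ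
  have hd1 : ∀ n, dseq α n = 1 ∨ dseq α n = -1 := dseq_pm α
  have hd1' : ∀ n, dseq β n = 1 ∨ dseq β n = -1 := dseq_pm β
  have hxc : ∀ n, |x - C (dseq α) n| ≤ (1/2)^n := fun n => close hda hd1 (hx n)
  have hyc : ∀ n, |y - C (dseq β) n| ≤ (1/2)^n := fun n => close hdb hd1' (hy n)
  constructor
  · intro hxy
    by_cases hab : α = β
    · exact Or.inl hab
    right
    have hex : ∃ n, α n ≠ β n := Function.ne_iff.mp hab
    set i := Nat.find hex with hidef
    have hi : α i ≠ β i := Nat.find_spec hex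
    have hmin : ∀ j < i, α j = β j := fun j hj => not_not.mp (Nat.find_min hex hj)
    have hdmin : ∀ j < i, dseq α j = dseq β j := fun j hj => dseq_congr (hmin j hj)
    have hdi : dseq α i = -(dseq β i) := by
      have hne : dseq α i ≠ dseq β i := fun h => hi (by rw [hda i, hdb i, h])
      rcases hd1 i with h | h <;> rcases hd1' i with h' | h' <;>
        simp only [h, h'] at hne ⊢ <;> norm_num at *
    have hEmin : ∀ k < i, E (dseq α) k = E (dseq β) k := fun k hk =>
      E_congr fun j hj => hdmin j (lt_of_le_of_lt hj hk)
    have hE'i : E (dseq β) i = -(E (dseq α) i) := Ei_neg hdmin hdi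
    have hsqi : E (dseq α) i * E (dseq α) i = 1 := by
      rcases E_pm hd1 i with h | h <;> rw [h] <;> norm_num
    have hxy' : ∀ n, |C (dseq α) n - C (dseq β) n| ≤ 2*(1/2)^n := by
      intro n
      have t1 := hxc n
      have t2 := hyc n
      rw [hxy] at t1
      calc |C (dseq α) n - C (dseq β) n|
          ≤ |C (dseq α) n - y| + |y - C (dseq β) n| := abs_sub_le _ _ _
        _ ≤ (1/2)^n + (1/2)^n := add_le_add (by rw [abs_sub_comm]; exact t1) t2
        _ = 2*(1/2)^n := by ring
    have key : ∀ j, i < j → E (dseq α) j = -(E (dseq α) i) ∧ E (dseq β) j = E (dseq α) i := by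
      intro j
      induction j using Nat.strong_induction_on with
      | _ j ih =>
        intro hij
        have hdiff : C (dseq α) j - C (dseq β) j = 2 * (E (dseq α) i) * (1/2)^j :=
          Cdiff hEmin rfl hE'i j hij (fun k hk1 hk2 => ih k hk2 hk1)
        have hb := hxy' (j+1)
        have hC : C (dseq α) (j+1) - C (dseq β) (j+1) =
            2*(E (dseq α) i)*(1/2)^j + (E (dseq α) j - E (dseq β) j) * (1/2)^(j+1) := by
          rw [C_succ, C_succ]; linear_combination hdiff
        rw [hC, pow_succ, abs_le] at hb
        have hp : (0:ℝ) < (1/2:ℝ)^j := pow_pos (by norm_num) j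
        rcases E_pm hd1 i with hσ | hσ <;> rcases E_pm hd1 j with h1 | h1 <;>
          rcases E_pm hd1' j with h2 | h2 <;>
          rw [hσ, h1, h2] at hb ⊢ <;>
          first
          | (exfalso; obtain ⟨hb1, hb2⟩ := hb; linarith)
          | (refine ⟨?_, ?_⟩ <;> norm_num)
    refine ⟨i, hmin, ?_, ?_, ?_⟩
    · rcases hd1 i with h | h <;> rcases hd1' i with h' | h'
      · exfalso; rw [h, h'] at hdi; norm_num at hdi
      · exact Or.inr ⟨by rw [hda i, h], by rw [hdb i, h']⟩
      · exact Or.inl ⟨by rw [hda i, h], by rw [hdb i, h']⟩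
      · exfalso; rw [h, h'] at hdi; norm_num at hdi
    · constructor
      · have h1 : dseq α (i+1) = 1 := by
          have hh := d_eq_of_E hd1 i
          rw [(key (i+1) (Nat.lt_succ_self i)).1] at hh
          rw [hh]; linear_combination hsqi
        rw [hda (i+1), h1]
      · have h1 : dseq β (i+1) = 1 := by
          have hh := d_eq_of_E hd1' i
          rw [(key (i+1) (Nat.lt_succ_self i)).2, hE'i] at hh
          rw [hh]; linear_combination hsqi
        rw [hdb (i+1), h1]
    · intro j hj
      obtain ⟨m, rfl⟩ : ∃ m, j = m + 1 := ⟨j - 1, by omega⟩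
      have him : i < m := by omega
      constructor
      · have h1 : dseq α (m+1) = -1 := by
          have hh := d_eq_of_E hd1 m
          rw [(key (m+1) (by omega)).1, (key m him).1] at hh
          rw [hh]; linear_combination -hsqi
        rw [hda (m+1), h1]
      · have h1 : dseq β (m+1) = -1 := by
          have hh := d_eq_of_E hd1' m
          rw [(key (m+1) (by omega)).2, (key m him).2] at hh
          rw [hh]; linear_combination -hsqi
        rw [hdb (m+1), h1]
  · intro h
    rcases h with rfl | ⟨i, hmin, hdig, hsucc, htail⟩
    · apply eq_of_close 0
      intro n _
      have t1 := hxc n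
      have t2 := hyc n
      have hp : (0:ℝ) < (1/2:ℝ)^n := pow_pos (by norm_num) n
      have t3 := abs_sub_le x (C (dseq α) n) y
      rw [abs_sub_comm (C (dseq α) n) y] at t3
      linarith
    · have hdm : ∀ j < i, dseq α j = dseq β j := fun j hj => dseq_congr (hmin j hj)
      have hdi : dseq α i = -(dseq β i) := by
        rcases hdig with ⟨h1, h2⟩ | ⟨h1, h2⟩
        · rw [dseq_eq_neg_one h1, dseq_eq_one h2]
        · rw [dseq_eq_one h1, dseq_eq_neg_one h2]; norm_num
      have hdi1 : dseq α (i+1) = 1 := dseq_eq_one hsucc.1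
      have hdi1' : dseq β (i+1) = 1 := dseq_eq_one hsucc.2
      have htl : ∀ j, i+1 < j → dseq α j = -1 ∧ dseq β j = -1 := fun j hj =>
        ⟨dseq_eq_neg_one (htail j hj).1, dseq_eq_neg_one (htail j hj).2⟩
      have hEmin : ∀ k < i, E (dseq α) k = E (dseq β) k := fun k hk =>
        E_congr fun j hj => hdm j (lt_of_le_of_lt hj hk)
      have hE'i : E (dseq β) i = -(E (dseq α) i) := Ei_neg hdm hdi
      have key : ∀ j, i < j →
          E (dseq α) j = -(E (dseq α) i) ∧ E (dseq β) j = E (dseq α) i := by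
        intro j hj
        induction j, hj using Nat.le_induction with
        | base =>
          constructor
          · rw [E_succ, hdi1]; ring
          · rw [E_succ, hdi1', hE'i]; ring
        | succ j hj ih =>
          have hdj := htl (j+1) (by omega)
          constructor
          · rw [E_succ, hdj.1, ih.1]; ring
          · rw [E_succ, hdj.2, ih.2]; ring
      have hdiff : ∀ n, i < n →
          C (dseq α) n - C (dseq β) n = 2 * (E (dseq α) i) * (1/2)^n :=
        fun n hn => Cdiff hEmin rfl hE'i n hn (fun k hk _ => key k hk)
      have habs : |E (dseq α) i| = 1 := by
        rcases E_pm hd1 i with h | h <;> rw [h] <;> norm_num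
      apply eq_of_close i
      intro n hn
      have t1 := hxc n
      have t4 := hyc n
      rw [abs_sub_comm] at t4
      have t2 := abs_sub_le x (C (dseq α) n) y
      have t3 := abs_sub_le (C (dseq α) n) (C (dseq β) n) y
      have t5 : |C (dseq α) n - C (dseq β) n| = 2 * (1/2:ℝ)^n := by
        rw [hdiff n hn, abs_mul, abs_mul, habs,
          abs_of_nonneg (by positivity : (0:ℝ) ≤ (1/2:ℝ)^n)]
        norm_num
      linarith
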